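/- There exists a constant c > 0 such that for every n ∈ ℕ divisible by 7 and every vtree T over {x_1, …, x_n}, the factor width of the hidden weighted bit function HWB_n with respect to T is at least 2^{cn}; in particular, every TDD (respecting any vtree over {x_1, …, x_n}) computing HWB_n has size at least 2^{cn}. -/

import Mathlib

/-- A vtree: a rooted binary tree whose leaves are labeled by variables. -/
inductive Vtree (V : Type) where
  | leaf : V → Vtree V
  | node : Vtree V → Vtree V → Vtree V

namespace Vtree

variable {V : Type} [DecidableEq V]

/-- The set of variables labeling the leaves of a vtree. -/
def vars : Vtree V → Finset V
  | leaf x => {x}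
  | node l r => l.vars ∪ r.vars

/-- A vtree is proper when its leaves carry pairwise distinct variables,
so that the leaves are in one-to-one correspondence with `vars`. -/
def Proper : Vtree V → Prop
  | leaf _ => True
  | node l r => l.Proper ∧ r.Proper ∧ Disjoint l.vars r.vars

/-- `T.IsNode t` : `t` is (the subtree rooted at) a node of `T`. -/
def IsNode : Vtree V → Vtree V → Prop
  | leaf x, t => t = leaf x
  | node l r, t => t = node l r ∨ l.IsNode t ∨ r.IsNode t

/-- Remove every leaf whose variable is in `Y`, suppressing unary nodes.
Returns `none` if no leaf survives. -/
def restrict (Y : Finset V) : Vtree V → Option (Vtree V)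
  | leaf x => if x ∈ Y then none else some (leaf x)
  | node l r =>
    match l.restrict Y, r.restrict Y with
    | none, o => o
    | some l', none => some l'
    | some l', some r' => some (node l' r')

/-- The vtree `T ∖ x`. -/
def remove (x : V) (T : Vtree V) : Option (Vtree V) := T.restrict {x}

/-- A vtree is linear when every internal node has a leaf child. -/
def Linear : Vtree V → Prop
  | leaf _ => True
  | node l r => ((∃ x, l = leaf x) ∨ (∃ x, r = leaf x)) ∧ l.Linear ∧ r.Linear

/-- The variable order induced by a linear vtree. -/
def order : Vtree V → List V
  | leaf x => [x]
  | node (leaf x) r => x :: r.order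
  | node l (leaf x) => x :: l.order
  | node l r => l.order ++ r.order

end Vtree

/-- Labels of leaf-layer nodes of a TDD: the positive literal, the negative
literal, and the constants 1 and 0. -/
inductive TLab where
  | pos | neg | one | zero
deriving DecidableEq

/-- Disjunction of two leaf labels (used when contracting twin leaf nodes). -/
def TLab.lor : TLab → TLab → TLab
  | .zero, a => a
  | a, .zero => a
  | .one, _ => .one
  | _, .one => .one
  | .pos, .pos => .pos
  | .neg, .neg => .neg
  | .pos, .neg => .one
  | .neg, .pos => .one

/-- A (non-deterministic) tree decision diagram structured along a vtree:
one layer of nodes (identified by natural numbers) per vtree node; leaf-layer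
nodes carry labels, internal-layer nodes carry their sets of input pairs. -/
inductive NTDD (V : Type) where
  | leaf (x : V) (ns : Finset ℕ) (lab : ℕ → TLab)
  | node (l r : NTDD V) (ns : Finset ℕ) (E : ℕ → Finset (ℕ × ℕ))

namespace NTDD

variable {V : Type}

/-- The vtree that an nTDD is structured along. -/
def shape : NTDD V → Vtree V
  | leaf x _ _ => .leaf x
  | node l r _ _ => .node l.shape r.shape

/-- The set of nodes of the top (root) layer. -/
def nodes : NTDD V → Finset ℕ
  | leaf _ ns _ => ns
  | node _ _ ns _ => ns

/-- The size of an nTDD: the total number of input pairs. -/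
def size : NTDD V → ℕ
  | leaf _ _ _ => 0
  | node l r ns E => l.size + r.size + ∑ g ∈ ns, (E g).card

/-- The width of an nTDD: the maximal cardinality of a layer. -/
def width : NTDD V → ℕ
  | leaf _ ns _ => ns.card
  | node l r ns _ => max ns.card (max l.width r.width)

/-- `C.sat g τ` : (the restriction of) the assignment `τ` is a model of the
function `f_g` computed by the top-layer node `g` of `C`. -/
def sat : NTDD V → ℕ → (V → Bool) → Prop
  | leaf x _ lab, g, τ =>
    match lab g with
    | .pos => τ x = true
    | .neg => τ x = false
    | .one => True
    | .zero => False
  | node l r _ E, g, τ => ∃ p ∈ E g, l.sat p.1 τ ∧ r.sat p.2 τ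

/-- Well-formedness: input pairs of top-layer nodes reference nodes of the
children layers. -/
def WF : NTDD V → Prop
  | leaf _ _ _ => True
  | node l r ns E => l.WF ∧ r.WF ∧ ∀ g ∈ ns, ∀ p ∈ E g, p.1 ∈ l.nodes ∧ p.2 ∈ r.nodes

/-- Determinism, turning an nTDD into a TDD: at each leaf layer at most one
node labeled by each of `x`, `¬x`, `1`, and if a node is labeled `1` then all
other nodes are labeled `0`; at each internal layer every pair is the input of
at most one node. -/
def Det : NTDD V → Prop
  | leaf _ ns lab =>
      (∀ g ∈ ns, ∀ g' ∈ ns, lab g = TLab.pos → lab g' = TLab.pos → g = g') ∧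
      (∀ g ∈ ns, ∀ g' ∈ ns, lab g = TLab.neg → lab g' = TLab.neg → g = g') ∧
      (∀ g ∈ ns, ∀ g' ∈ ns, lab g = TLab.one → lab g' = TLab.one → g = g') ∧
      (∀ g ∈ ns, lab g = TLab.one → ∀ g' ∈ ns, g' ≠ g → lab g' = TLab.zero)
  | node l r ns E => l.Det ∧ r.Det ∧ ∀ g ∈ ns, ∀ g' ∈ ns, g ≠ g' → Disjoint (E g) (E g')

/-- `C.Subdiagram D` : `D` is the sub-diagram of `C` sitting at some node of
the underlying vtree (including `C` itself). -/
def Subdiagram : NTDD V → NTDD V → Prop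
  | leaf x ns lab, D => D = leaf x ns lab
  | node l r ns E, D => D = node l r ns E ∨ l.Subdiagram D ∨ r.Subdiagram D

/-- A TDD is full if, at every layer, every assignment is a model of some node
of that layer. -/
def Full (C : NTDD V) : Prop :=
  ∀ D : NTDD V, C.Subdiagram D → ∀ τ : V → Bool, ∃ g ∈ D.nodes, D.sat g τ

end NTDD

/-- A choice of one node id per vtree node, mirroring the vtree: the data of a
certificate. -/
inductive IdTree where
  | leaf (g : ℕ)
  | node (g : ℕ) (l r : IdTree)

/-- The id chosen at the root. -/
def IdTree.root : IdTree → ℕ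
  | .leaf g => g
  | .node g _ _ => g

namespace NTDD

variable {V : Type}

/-- `C.IsCert P τ` : the choice `P` of one node per layer is a certificate for
`τ` in `C` (except for the root condition `P.root = out`, stated separately):
at a leaf labeled `x` the chosen node is labeled `1` or by a literal satisfied
by `τ`, and at an internal node the chosen pair of children nodes is an input
of the chosen node. -/
def IsCert : NTDD V → IdTree → (V → Bool) → Prop
  | leaf x ns lab, IdTree.leaf g, τ =>
      g ∈ ns ∧ (lab g = TLab.one ∨ (lab g = TLab.pos ∧ τ x = true) ∨
        (lab g = TLab.neg ∧ τ x = false))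
  | node l r ns E, IdTree.node g pl pr, τ =>
      g ∈ ns ∧ (pl.root, pr.root) ∈ E g ∧ l.IsCert pl τ ∧ r.IsCert pr τ
  | _, _, _ => False

/-- `SubPair C P D Q` : `D` is the sub-diagram of `C` at some vtree node `t`,
and `Q` is the corresponding part of the certificate data `P` (so `Q.root` is
the node that `P` chooses at `t`). -/
def SubPair : NTDD V → IdTree → NTDD V → IdTree → Prop
  | leaf x ns lab, P, D, Q => D = leaf x ns lab ∧ Q = P
  | node l r ns E, P, D, Q =>
      (D = node l r ns E ∧ Q = P) ∨
      (match P with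
       | IdTree.node _ pl pr => l.SubPair pl D Q ∨ r.SubPair pr D Q
       | _ => False)

/-- Contract the two top-layer nodes `g1, g1'` into the fresh node `v`. -/
def contractLayer (g1 g1' v : ℕ) : NTDD V → NTDD V
  | leaf x ns lab =>
      leaf x (insert v ((ns.erase g1).erase g1'))
        (fun g => if g = v then (lab g1).lor (lab g1') else lab g)
  | node l r ns E =>
      node l r (insert v ((ns.erase g1).erase g1'))
        (fun g => if g = v then E g1 ∪ E g1' else E g)

/-- Twin contraction of nodes `g1, g1'` of the left child layer into `v`:
they are merged in the left layer, and every input pair `(g1, g2)` or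
`(g1', g2)` of a top-layer node is replaced by `(v, g2)`. -/
def contractAtL (g1 g1' v : ℕ) : NTDD V → NTDD V
  | node l r ns E =>
      node (l.contractLayer g1 g1' v) r ns
        (fun g => (E g).image (fun p => if p.1 = g1 ∨ p.1 = g1' then (v, p.2) else p))
  | C => C

/-- Twin contraction of nodes `g1, g1'` of the right child layer into `v`. -/
def contractAtR (g1 g1' v : ℕ) : NTDD V → NTDD V
  | node l r ns E =>
      node l (r.contractLayer g1 g1' v) ns
        (fun g => (E g).image (fun p => if p.2 = g1 ∨ p.2 = g1' then (p.1, v) else p))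
  | C => C

open Classical in
/-- Replace the sub-diagram `D` of `C` by `D'` (in a proper vtree, sub-diagrams
at distinct positions are distinct, so this is unambiguous). -/
noncomputable def replace : NTDD V → NTDD V → NTDD V → NTDD V
  | leaf x ns lab, D, D' => if leaf x ns lab = D then D' else leaf x ns lab
  | node l r ns E, D, D' =>
      if node l r ns E = D then D'
      else node (l.replace D D') (r.replace D D') ns E

/-- `g1` and `g1'` are twins of the left child layer: they have the same
siblings with respect to every top-layer node. -/
def TwinsL (g1 g1' : ℕ) : NTDD V → Prop
  | node l _ ns E => g1 ∈ l.nodes ∧ g1' ∈ l.nodes ∧ g1 ≠ g1' ∧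
      ∀ g ∈ ns, ∀ g2 : ℕ, ((g1, g2) ∈ E g ↔ (g1', g2) ∈ E g)
  | _ => False

/-- `g1` and `g1'` are twins of the right child layer. -/
def TwinsR (g1 g1' : ℕ) : NTDD V → Prop
  | node _ r ns E => g1 ∈ r.nodes ∧ g1' ∈ r.nodes ∧ g1 ≠ g1' ∧
      ∀ g ∈ ns, ∀ g2 : ℕ, ((g2, g1) ∈ E g ↔ (g2, g1') ∈ E g)
  | _ => False

/-- The node set of the left child layer. -/
def leftNodes : NTDD V → Finset ℕ
  | node l _ _ _ => l.nodes
  | _ => ∅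

/-- The node set of the right child layer. -/
def rightNodes : NTDD V → Finset ℕ
  | node _ r _ _ => r.nodes
  | _ => ∅

end NTDD

/-- The number of distinct non-trivial `Y`-subfunctions of the Boolean
function `f` : functions of the form `σ ↦ f (Y.piecewise τ σ)` for some
`τ`, having at least one model. -/
noncomputable def subCount {V : Type} [DecidableEq V] (f : (V → Bool) → Prop) (Y : Finset V) : ℕ :=
  Nat.card {h : (V → Bool) → Prop |
    (∃ τ : V → Bool, h = fun σ => f (Y.piecewise τ σ)) ∧ ∃ σ : V → Bool, h σ}

/-- The number of distinct `Y`-subfunctions of `f` (trivial ones included). -/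
noncomputable def subCountAll {V : Type} [DecidableEq V] (f : (V → Bool) → Prop) (Y : Finset V) : ℕ :=
  Nat.card {h : (V → Bool) → Prop |
    ∃ τ : V → Bool, h = fun σ => f (Y.piecewise τ σ)}

/-- The hidden weighted bit function over variables `{x_1, …, x_n}` (variables
named by natural numbers): `HWB n τ` holds iff `S ≥ 1` and `τ S = true`,
where `S` is the number of variables in `{1, …, n}` set to `true` by `τ`. -/
def HWB (n : ℕ) (τ : ℕ → Bool) : Prop :=
  1 ≤ (∑ i ∈ Finset.Icc 1 n, if τ i then 1 else 0) ∧
    τ (∑ i ∈ Finset.Icc 1 n, if τ i then 1 else 0) = true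


set_option linter.unusedSectionVars false
namespace Vtree
variable {V : Type} [DecidableEq V]
lemma isNode_self (T : Vtree V) : T.IsNode T := by
  cases T with
  | leaf x => rfl
  | node l r => exact Or.inl rfl

lemma vars_nonempty (T : Vtree V) : T.vars.Nonempty := by
  induction T with
  | leaf x => exact ⟨x, Finset.mem_singleton_self x⟩
  | node l r ihl ihr => exact ihl.mono (by simp [vars, Finset.subset_union_left])

lemma isNode_vars_subset {T t : Vtree V} (h : T.IsNode t) : t.vars ⊆ T.vars := by
  induction T with
  | leaf x => cases h; exact Finset.Subset.refl _
  | node l r ihl ihr =>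
    rcases h with h | h | h
    · cases h; exact Finset.Subset.refl _
    · exact (ihl h).trans Finset.subset_union_left
    · exact (ihr h).trans Finset.subset_union_right

lemma proper_of_isNode {T t : Vtree V} (hp : T.Proper) (h : T.IsNode t) : t.Proper := by
  induction T with
  | leaf x => cases h; exact hp
  | node l r ihl ihr =>
    rcases h with h | h | h
    · cases h; exact hp
    · exact ihl hp.1 h
    · exact ihr hp.2.1 h

lemma card_vars_node {l r : Vtree V} (hp : (node l r).Proper) :
    (node l r).vars.card = l.vars.card + r.vars.card := by
  have := hp.2.2
  simp [vars, Finset.card_union_of_disjoint this]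

lemma one_le_card_vars (T : Vtree V) : 1 ≤ T.vars.card :=
  Finset.card_pos.mpr (vars_nonempty T)

/-- Balance lemma: some node has size in `[K, 2K-2]`. -/
lemma exists_balanced {T : Vtree V} (hp : T.Proper) {K : ℕ} (hK : 2 ≤ K)
    (hcard : K ≤ T.vars.card) :
    ∃ t : Vtree V, T.IsNode t ∧ K ≤ t.vars.card ∧ t.vars.card ≤ 2 * K - 2 := by
  induction T with
  | leaf x =>
    refine ⟨leaf x, isNode_self _, hcard, ?_⟩
    simp only [vars, Finset.card_singleton] at hcard ⊢
    omega
  | node l r ihl ihr =>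
    by_cases hle : (node l r).vars.card ≤ 2 * K - 2
    · exact ⟨node l r, isNode_self _, hcard, hle⟩
    · have hsum := card_vars_node hp
      have hbig : 2 * K - 1 ≤ l.vars.card + r.vars.card := by omega
      rcases le_total l.vars.card r.vars.card with hlr | hlr
      · have : K ≤ r.vars.card := by omega
        obtain ⟨t, ht, h1, h2⟩ := ihr hp.2.1 this
        exact ⟨t, Or.inr (Or.inr ht), h1, h2⟩
      · have : K ≤ l.vars.card := by omega
        obtain ⟨t, ht, h1, h2⟩ := ihl hp.1 this
        exact ⟨t, Or.inr (Or.inl ht), h1, h2⟩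

/-- Every vtree is a leaf or has a node with two leaf children. -/
lemma exists_cherry (T : Vtree V) :
    (∃ x, T = leaf x) ∨ ∃ p q : V, T.IsNode (node (leaf p) (leaf q)) := by
  induction T with
  | leaf x => exact Or.inl ⟨x, rfl⟩
  | node l r ihl ihr =>
    right
    rcases ihl with ⟨x, rfl⟩ | ⟨p, q, h⟩
    · rcases ihr with ⟨y, rfl⟩ | ⟨p, q, h⟩
      · exact ⟨x, y, Or.inl rfl⟩
      · exact ⟨p, q, Or.inr (Or.inr h)⟩
    · exact ⟨p, q, Or.inr (Or.inl h)⟩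

end Vtree

-- appended to ctx.lean
namespace NTDD

variable {V : Type} [DecidableEq V]

lemma sat_congr : ∀ (D : NTDD V) (g : ℕ) (ρ ρ' : V → Bool),
    (∀ i ∈ D.shape.vars, ρ i = ρ' i) → D.sat g ρ → D.sat g ρ' := by
  intro D
  induction D with
  | leaf x ns lab =>
    intro g ρ ρ' hag
    have hx : ρ x = ρ' x := hag x (by simp [shape, Vtree.vars])
    simp only [sat]
    cases lab g <;> intro h <;> first | exact hx ▸ h | exact h
  | node l r ns E ihl ihr =>
    rintro g ρ ρ' hag ⟨p, hp, h1, h2⟩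
    refine ⟨p, hp, ?_, ?_⟩
    · exact ihl p.1 ρ ρ' (fun i hi => hag i (by
        simp only [shape, Vtree.vars, Finset.mem_union]; exact Or.inl hi)) h1
    · exact ihr p.2 ρ ρ' (fun i hi => hag i (by
        simp only [shape, Vtree.vars, Finset.mem_union]; exact Or.inr hi)) h2

lemma sat_unique : ∀ (D : NTDD V), D.WF → D.Det → ∀ (ρ : V → Bool) (g g' : ℕ),
    g ∈ D.nodes → g' ∈ D.nodes → D.sat g ρ → D.sat g' ρ → g = g' := by
  intro D
  induction D with
  | leaf x ns lab =>
    intro hWF hDet ρ g g' hg hg' hs hs'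
    obtain ⟨hpos, hneg, hone, honez⟩ := hDet
    simp only [sat] at hs hs'
    simp only [nodes] at hg hg'
    by_contra hne
    cases hl : lab g with
    | zero => rw [hl] at hs; exact hs
    | one =>


      have := honez g hg hl g' hg' (Ne.symm hne)
      rw [this] at hs'; exact hs'
    | pos =>
      cases hl' : lab g' with
      | zero => rw [hl'] at hs'; exact hs'
      | one =>
        have := honez g' hg' hl' g hg hne
        rw [this] at hs; exact hs
      | pos => exact hne (hpos g hg g' hg' hl hl')
      | neg =>
        rw [hl] at hs; rw [hl'] at hs'
        simp only at hs hs'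
        rw [hs] at hs'; exact Bool.true_eq_false.mp hs' |>.elim
    | neg =>
      cases hl' : lab g' with
      | zero => rw [hl'] at hs'; exact hs'
      | one =>
        have := honez g' hg' hl' g hg hne
        rw [this] at hs; exact hs
      | neg => exact hne (hneg g hg g' hg' hl hl')
      | pos =>
        rw [hl] at hs; rw [hl'] at hs'
        simp only at hs hs'
        rw [hs] at hs'; exact Bool.false_eq_true.mp hs' |>.elim
  | node l r ns E ihl ihr =>
    intro hWF hDet ρ g g' hg hg' hs hs'
    obtain ⟨hlWF, hrWF, hE⟩ := hWF
    obtain ⟨hlD, hrD, hdisj⟩ := hDet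
    obtain ⟨p, hp, h1, h2⟩ := hs
    obtain ⟨p', hp', h1', h2'⟩ := hs'
    simp only [nodes] at hg hg'
    obtain ⟨hp1, hp2⟩ := hE g hg p hp
    obtain ⟨hp1', hp2'⟩ := hE g' hg' p' hp'
    have hfst : p.1 = p'.1 := ihl hlWF hlD ρ p.1 p'.1 hp1 hp1' h1 h1'
    have hsnd : p.2 = p'.2 := ihr hrWF hrD ρ p.2 p'.2 hp2 hp2' h2 h2'
    have hpp : p = p' := Prod.ext hfst hsnd
    by_contra hne
    have := hdisj g hg g' hg' hne
    exact Finset.disjoint_left.mp this hp (hpp ▸ hp')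

lemma subdiagram_wf {C D : NTDD V} (hWF : C.WF) (hsub : C.Subdiagram D) : D.WF := by
  induction C with
  | leaf x ns lab => cases hsub; exact hWF
  | node l r ns E ihl ihr =>
    rcases hsub with h | h | h
    · cases h; exact hWF
    · exact ihl hWF.1 h
    · exact ihr hWF.2.1 h

lemma subdiagram_det {C D : NTDD V} (hDet : C.Det) (hsub : C.Subdiagram D) : D.Det := by
  induction C with
  | leaf x ns lab => cases hsub; exact hDet
  | node l r ns E ihl ihr =>
    rcases hsub with h | h | h
    · cases h; exact hDet
    · exact ihl hDet.1 h
    · exact ihr hDet.2.1 h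

lemma subdiagram_shape {C D : NTDD V} (hsub : C.Subdiagram D) :
    C.shape.IsNode D.shape := by
  induction C with
  | leaf x ns lab => cases hsub; rfl
  | node l r ns E ihl ihr =>
    rcases hsub with h | h | h
    · cases h; exact Vtree.isNode_self _
    · exact Or.inr (Or.inl (ihl h))
    · exact Or.inr (Or.inr (ihr h))

lemma exists_subdiagram {C : NTDD V} {t : Vtree V} (h : C.shape.IsNode t) :
    ∃ D : NTDD V, C.Subdiagram D ∧ D.shape = t := by
  induction C with
  | leaf x ns lab =>
    refine ⟨leaf x ns lab, rfl, ?_⟩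
    cases h; rfl
  | node l r ns E ihl ihr =>
    rcases h with h | h | h
    · exact ⟨node l r ns E, Or.inl rfl, h.symm⟩
    · obtain ⟨D, h1, h2⟩ := ihl h
      exact ⟨D, Or.inr (Or.inl h1), h2⟩
    · obtain ⟨D, h1, h2⟩ := ihr h
      exact ⟨D, Or.inr (Or.inr h1), h2⟩

lemma sat_down {C : NTDD V} (hWF : C.WF) {D : NTDD V} (hsub : C.Subdiagram D)
    {g : ℕ} (hg : g ∈ C.nodes) {ρ : V → Bool} (hsat : C.sat g ρ) :
    ∃ g' ∈ D.nodes, D.sat g' ρ := by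
  induction C generalizing g with
  | leaf x ns lab => cases hsub; exact ⟨g, hg, hsat⟩
  | node l r ns E ihl ihr =>
    rcases hsub with h | h | h
    · cases h; exact ⟨g, hg, hsat⟩
    · obtain ⟨p, hp, h1, h2⟩ := hsat
      obtain ⟨hp1, hp2⟩ := hWF.2.2 g hg p hp
      exact ihl hWF.1 h hp1 h1
    · obtain ⟨p, hp, h1, h2⟩ := hsat
      obtain ⟨hp1, hp2⟩ := hWF.2.2 g hg p hp
      exact ihr hWF.2.1 h hp2 h2

lemma sat_exchange {C : NTDD V} (hpr : C.shape.Proper) (hWF : C.WF)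
    {D : NTDD V} (hsub : C.Subdiagram D) (ρ ρ' : V → Bool)
    (hout : ∀ i, i ∉ D.shape.vars → ρ i = ρ' i)
    (hsw : ∀ g ∈ D.nodes, (D.sat g ρ ↔ D.sat g ρ')) :
    ∀ h ∈ C.nodes, C.sat h ρ → C.sat h ρ' := by
  induction C with
  | leaf x ns lab =>
    cases hsub
    intro h hh hs
    exact (hsw h hh).mp hs
  | node l r ns E ihl ihr =>
    rcases hsub with hD | hD | hD
    · cases hD
      intro h hh hs
      exact (hsw h hh).mp hs
    · intro h hh hs
      obtain ⟨p, hp, h1, h2⟩ := hs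
      obtain ⟨hp1, hp2⟩ := hWF.2.2 h hh p hp
      refine ⟨p, hp, ihl hpr.1 hWF.1 hD p.1 hp1 h1, ?_⟩
      refine sat_congr r p.2 ρ ρ' (fun i hi => hout i (fun hiD => ?_)) h2
      have hDl : D.shape.vars ⊆ l.shape.vars :=
        Vtree.isNode_vars_subset (subdiagram_shape hD)
      exact Finset.disjoint_left.mp hpr.2.2 (hDl hiD) hi
    · intro h hh hs
      obtain ⟨p, hp, h1, h2⟩ := hs
      obtain ⟨hp1, hp2⟩ := hWF.2.2 h hh p hp
      refine ⟨p, hp, ?_, ihr hpr.2.1 hWF.2.1 hD p.2 hp2 h2⟩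
      refine sat_congr l p.1 ρ ρ' (fun i hi => hout i (fun hiD => ?_)) h1
      have hDr : D.shape.vars ⊆ r.shape.vars :=
        Vtree.isNode_vars_subset (subdiagram_shape hD)
      exact Finset.disjoint_right.mp hpr.2.2 (hDr hiD) hi

lemma sum_le_size {C : NTDD V} {l r : NTDD V} {ns : Finset ℕ} {E : ℕ → Finset (ℕ × ℕ)}
    (hsub : C.Subdiagram (node l r ns E)) :
    (∑ g ∈ ns, (E g).card) ≤ C.size := by
  induction C with
  | leaf x ns' lab => exact absurd hsub (by simp [Subdiagram])
  | node l' r' ns' E' ihl ihr =>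
    rcases hsub with h | h | h
    · injection h with e1 e2 e3 e4
      subst e3 e4
      simp [size]
    · have := ihl h
      simp only [size]
      omega
    · have := ihr h
      simp only [size]
      omega

end NTDD
lemma subfun_finite' {V : Type} [DecidableEq V] (f : (V → Bool) → Prop) (Y : Finset V) :
    {h : (V → Bool) → Prop |
      (∃ τ : V → Bool, h = fun σ => f (Y.piecewise τ σ)) ∧ ∃ σ : V → Bool, h σ}.Finite := by
  apply Set.Finite.subset (Set.finite_range
    (fun v : (↥Y → Bool) => fun σ : V → Bool =>
      f (Y.piecewise (fun i => if hi : i ∈ Y then v ⟨i, hi⟩ else false) σ)))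
  rintro h ⟨⟨τ, rfl⟩, -⟩
  refine ⟨fun i => τ i.1, funext fun σ => ?_⟩
  show f (Y.piecewise (fun i => if hi : i ∈ Y then τ i else false) σ) = f (Y.piecewise τ σ)
  congr 1
  exact Finset.piecewise_congr Y (fun i hi => dif_pos hi) (fun _ _ => rfl)

namespace NTDD

variable {V : Type} [DecidableEq V]

lemma subCount_le_size (C : NTDD V) (hpr : C.shape.Proper) (hWF : C.WF) (hDet : C.Det)
    (out : ℕ) (hout : out ∈ C.nodes) {D : NTDD V} (hsub : C.Subdiagram D)
    {l r : NTDD V} {ns : Finset ℕ} {E : ℕ → Finset (ℕ × ℕ)} (hDeq : D = node l r ns E) :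
    subCount (fun ρ => C.sat out ρ) D.shape.vars ≤ C.size := by
  classical
  subst hDeq
  set Y := (node l r ns E : NTDD V).shape.vars with hYdef
  set G := ns.filter (fun g => (E g).Nonempty) with hGdef
  have hDwf := subdiagram_wf hWF hsub
  have hDdet := subdiagram_det hDet hsub
  -- canonical description of each nontrivial subfunction by a node of the layer
  have key : ∀ h : (V → Bool) → Prop,
      (∃ τ : V → Bool, h = fun σ => C.sat out (Y.piecewise τ σ)) → (∃ σ, h σ) →
      ∃ g, g ∈ G ∧ ∀ σ : V → Bool, (h σ ↔ ∃ τ₂ : V → Bool,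
        (∀ g₂ ∈ ns, ((node l r ns E : NTDD V).sat g₂ (Y.piecewise τ₂ σ) ↔ g₂ = g)) ∧
        C.sat out (Y.piecewise τ₂ σ)) := by
    rintro h ⟨τ, rfl⟩ ⟨σ₀, hσ₀⟩
    obtain ⟨g, hgns, hgsat⟩ := sat_down hWF hsub hout hσ₀
    simp only [nodes] at hgns
    have hgE : (E g).Nonempty := by
      obtain ⟨p, hp, -, -⟩ := hgsat
      exact ⟨p, hp⟩
    have hagreeY : ∀ (σ σ' : V → Bool) (i : V), i ∈ Y →
        Y.piecewise τ σ i = Y.piecewise τ σ' i := by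
      intro σ σ' i hi
      rw [Finset.piecewise_eq_of_mem _ _ _ hi, Finset.piecewise_eq_of_mem _ _ _ hi]
    have hsatiff : ∀ (σ : V → Bool), ∀ g₂ ∈ ns,
        ((node l r ns E : NTDD V).sat g₂ (Y.piecewise τ σ) ↔ g₂ = g) := by
      intro σ g₂ hg₂
      constructor
      · intro hs
        have hs0 : (node l r ns E : NTDD V).sat g₂ (Y.piecewise τ σ₀) :=
          sat_congr _ g₂ _ _ (hagreeY σ σ₀) hs
        exact sat_unique _ hDwf hDdet _ g₂ g (by simpa [nodes] using hg₂)
          (by simpa [nodes] using hgns) hs0 hgsat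
      · rintro rfl
        exact sat_congr _ g₂ _ _ (hagreeY σ₀ σ) hgsat
    refine ⟨g, Finset.mem_filter.mpr ⟨hgns, hgE⟩, fun σ => ?_⟩
    constructor
    · intro hσ
      exact ⟨τ, fun g₂ hg₂ => hsatiff σ g₂ hg₂, hσ⟩
    · rintro ⟨τ₂, hτ₂sat, hτ₂out⟩
      refine sat_exchange hpr hWF hsub (Y.piecewise τ₂ σ) (Y.piecewise τ σ)
        (fun i hi => ?_) (fun g₂ hg₂ => ?_) out hout hτ₂out
      · rw [Finset.piecewise_eq_of_notMem _ _ _ hi, Finset.piecewise_eq_of_notMem _ _ _ hi]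
      · have hg₂ns : g₂ ∈ ns := by simpa [nodes] using hg₂
        rw [hτ₂sat g₂ hg₂ns, hsatiff σ g₂ hg₂ns]
  -- injection into the set of nodes with a nonempty edge set
  have hcard : subCount (fun ρ => C.sat out ρ) Y ≤ G.card := by
    have heq : subCount (fun ρ => C.sat out ρ) Y = Nat.card
        ↥{h : (V → Bool) → Prop |
          (∃ τ : V → Bool, h = fun σ => C.sat out (Y.piecewise τ σ)) ∧ ∃ σ, h σ} := rfl
    rw [heq]
    haveI : Finite ↥{h : (V → Bool) → Prop |
        (∃ τ : V → Bool, h = fun σ => C.sat out (Y.piecewise τ σ)) ∧ ∃ σ, h σ} :=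
      (subfun_finite' (fun ρ => C.sat out ρ) Y).to_subtype
    have hkey : ∀ h : ↥{h : (V → Bool) → Prop |
        (∃ τ : V → Bool, h = fun σ => C.sat out (Y.piecewise τ σ)) ∧ ∃ σ, h σ},
        ∃ g, g ∈ G ∧ ∀ σ : V → Bool, (h.1 σ ↔ ∃ τ₂ : V → Bool,
          (∀ g₂ ∈ ns, ((node l r ns E : NTDD V).sat g₂ (Y.piecewise τ₂ σ) ↔ g₂ = g)) ∧
          C.sat out (Y.piecewise τ₂ σ)) :=
      fun h => key h.1 h.2.1 h.2.2
    choose φ hφG hφ using hkey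
    have hinj : Function.Injective (fun h => (⟨φ h, hφG h⟩ : ↥G)) := by
      intro h h' heq2
      have hgg : φ h = φ h' := congrArg Subtype.val heq2
      apply Subtype.ext
      funext σ
      apply propext
      refine (hφ h σ).trans ?_
      rw [hgg]
      exact (hφ h' σ).symm
    have := Nat.card_le_card_of_injective _ hinj
    rwa [Nat.card_eq_finsetCard] at this
  have hGsum : G.card ≤ ∑ g ∈ ns, (E g).card := by
    calc G.card = ∑ _g ∈ G, 1 := by simp
      _ ≤ ∑ g ∈ G, (E g).card := Finset.sum_le_sum
          (fun g hg => Finset.card_pos.mpr (Finset.mem_filter.mp hg).2)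
      _ ≤ ∑ g ∈ ns, (E g).card := Finset.sum_le_sum_of_subset (Finset.filter_subset _ _)
  have hsz := sum_le_size hsub
  omega

end NTDD


def dcount (Y : Finset ℕ) (L w : ℕ) : ℕ := (Y ∩ Finset.Icc w (w + L)).card


/-- The set of nontrivial `Y` subfunctions of `f` is finite. -/
lemma subfun_finite {V : Type} [DecidableEq V] (f : (V → Bool) → Prop) (Y : Finset V) :
    {h : (V → Bool) → Prop |
      (∃ τ : V → Bool, h = fun σ => f (Y.piecewise τ σ)) ∧ ∃ σ : V → Bool, h σ}.Finite := by
  apply Set.Finite.subset (Set.finite_range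
    (fun v : (↥Y → Bool) => fun σ : V → Bool =>
      f (Y.piecewise (fun i => if hi : i ∈ Y then v ⟨i, hi⟩ else false) σ)))
  rintro h ⟨⟨τ, rfl⟩, -⟩
  refine ⟨fun i => τ i.1, funext fun σ => ?_⟩
  show f (Y.piecewise (fun i => if hi : i ∈ Y then τ i else false) σ) = f (Y.piecewise τ σ)
  congr 1
  exact Finset.piecewise_congr Y (fun i hi => dif_pos hi) (fun _ _ => rfl)

lemma two_pow_le_central (k : ℕ) : 2 ^ k ≤ (2 * k).choose k := by
  induction k with
  | zero => simp
  | succ k ih =>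
    have h1 : 2 * (k + 1) = (2 * k + 1) + 1 := by ring
    rw [h1, Nat.choose_succ_succ]
    have h2 : (2 * k).choose k ≤ (2 * k + 1).choose k := Nat.choose_le_choose k (by omega)
    have h3 : (2 * k + 1).choose (k + 1) = (2 * k).choose k + (2 * k).choose (k + 1) :=
      Nat.choose_succ_succ _ _
    calc 2 ^ (k + 1) = 2 ^ k + 2 ^ k := by ring
      _ ≤ (2 * k).choose k + (2 * k).choose k := by omega
      _ ≤ (2 * k + 1).choose k + (2 * k + 1).choose (k + 1) := by
          rw [h3]; omega

/-- indicator sums -/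
lemma sum_indicator_card {Ys A : Finset ℕ} (hA : A ⊆ Ys) :
    (∑ i ∈ Ys, if (decide (i ∈ A) : Bool) then (1 : ℕ) else 0) = A.card := by
  simp only [decide_eq_true_eq]
  rw [Finset.sum_ite_mem]
  rw [Finset.inter_eq_right.mpr hA]
  simp

/-- Main counting lower bound. -/
lemma subCount_ge_pow (n : ℕ) (Y : Finset ℕ) (hY : Y ⊆ Finset.Icc 1 n)
    (w w1 : ℕ) (h1 : 1 ≤ w1) (h11 : w1 ≤ w)
    (h2 : 2 * w1 ≤ dcount Y (n - Y.card) w)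
    (h3 : w + dcount Y (n - Y.card) w ≤ Y.card + w1) :
    2 ^ w1 ≤ subCount (HWB n) Y := by
  classical
  set m := Y.card with hm
  set L := n - m with hL
  set D := Y ∩ Finset.Icc w (w + L) with hD
  have hDY : D ⊆ Y := Finset.inter_subset_left
  have hdm : D.card ≤ m := Finset.card_le_card hDY
  have hmn : m ≤ n := by
    have := Finset.card_le_card hY
    simpa [Nat.card_Icc] using this
  have hcompl : (Finset.Icc 1 n \ Y).card = n - m := by
    rw [Finset.card_sdiff_of_subset hY]
    simp [Nat.card_Icc, hm]
  -- fixed part F0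
  obtain ⟨F0, hF0sub, hF0card⟩ : ∃ F0 ⊆ Y \ D, F0.card = w - w1 := by
    apply Finset.exists_subset_card_eq
    rw [Finset.card_sdiff_of_subset hDY]
    have : dcount Y L w = D.card := rfl
    omega
  have hF0Y : F0 ⊆ Y := hF0sub.trans (Finset.sdiff_subset)
  have hF0D : ∀ i ∈ F0, i ∉ D := fun i hi => (Finset.mem_sdiff.mp (hF0sub hi)).2
  -- sum splitting
  have hsplit : ∀ (τ σ : ℕ → Bool),
      (∑ i ∈ Finset.Icc 1 n, if Y.piecewise τ σ i then (1 : ℕ) else 0)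
        = (∑ i ∈ Y, if τ i then 1 else 0)
          + (∑ i ∈ Finset.Icc 1 n \ Y, if σ i then 1 else 0) := by
    intro τ σ
    conv_lhs => rw [← Finset.union_sdiff_of_subset hY]
    rw [Finset.sum_union Finset.disjoint_sdiff]
    congr 1
    · exact Finset.sum_congr rfl fun i hi => by rw [Finset.piecewise_eq_of_mem _ _ _ hi]
    · exact Finset.sum_congr rfl fun i hi => by
        rw [Finset.piecewise_eq_of_notMem _ _ _ (Finset.mem_sdiff.mp hi).2]
  -- the assignments
  have hcardSF : ∀ S ∈ Finset.powersetCard w1 D, (S ∪ F0).card = w := by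
    intro S hS
    obtain ⟨hSD, hScard⟩ := Finset.mem_powersetCard.mp hS
    rw [Finset.card_union_of_disjoint]
    · omega
    · exact Finset.disjoint_left.mpr fun i hiS hiF => hF0D i hiF (hSD hiS)
  have hSFY : ∀ S ∈ Finset.powersetCard w1 D, S ∪ F0 ⊆ Y := by
    intro S hS
    obtain ⟨hSD, -⟩ := Finset.mem_powersetCard.mp hS
    exact Finset.union_subset (hSD.trans hDY) hF0Y
  -- the model/witness construction: σ depends only on i₀
  have hwitness : ∀ i₀ ∈ D, ∃ σ : ℕ → Bool, ∀ S ∈ Finset.powersetCard w1 D,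
        (∑ i ∈ Finset.Icc 1 n,
          if Y.piecewise (fun j => decide (j ∈ S ∪ F0)) σ i then (1:ℕ) else 0) = i₀ := by
    intro i₀ hi₀
    have hi₀w : w ≤ i₀ ∧ i₀ ≤ w + L := by
      have := (Finset.mem_inter.mp hi₀).2
      exact Finset.mem_Icc.mp this
    obtain ⟨Z, hZsub, hZcard⟩ : ∃ Z ⊆ Finset.Icc 1 n \ Y, Z.card = i₀ - w := by
      apply Finset.exists_subset_card_eq
      rw [hcompl]
      omega
    refine ⟨fun j => decide (j ∈ Z), fun S hS => ?_⟩
    rw [hsplit]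
    rw [sum_indicator_card (hSFY S hS)]
    have : (∑ i ∈ Finset.Icc 1 n \ Y, if (decide (i ∈ Z) : Bool) then (1:ℕ) else 0) = Z.card :=
      sum_indicator_card hZsub
    rw [this, hcardSF S hS, hZcard]
    omega
  have h1n : ∀ i₀ ∈ D, 1 ≤ i₀ ∧ i₀ ∈ Y := by
    intro i₀ hi₀
    have h1 := hDY hi₀
    have h2 := Finset.mem_Icc.mp (hY h1)
    exact ⟨h2.1, h1⟩
  -- each subfunction of the family satisfies HWB at its witness
  have hsat : ∀ S ∈ Finset.powersetCard w1 D, ∀ i₀ ∈ D, ∀ σ : ℕ → Bool,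
      (∀ S' ∈ Finset.powersetCard w1 D,
        (∑ i ∈ Finset.Icc 1 n,
          if Y.piecewise (fun j => decide (j ∈ S' ∪ F0)) σ i then (1:ℕ) else 0) = i₀) →
      (HWB n (Y.piecewise (fun j => decide (j ∈ S ∪ F0)) σ) ↔ i₀ ∈ S ∪ F0) := by
    intro S hS i₀ hi₀ σ hσ
    have hsum := hσ S hS
    unfold HWB
    rw [hsum]
    rw [Finset.piecewise_eq_of_mem _ _ _ (h1n i₀ hi₀).2]
    constructor
    · rintro ⟨-, hv⟩
      exact of_decide_eq_true hv
    · intro hmem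
      exact ⟨(h1n i₀ hi₀).1, decide_eq_true hmem⟩
  -- membership in the subfunction set
  have hmem : ∀ S ∈ Finset.powersetCard w1 D,
      (fun σ => HWB n (Y.piecewise (fun j => decide (j ∈ S ∪ F0)) σ)) ∈
        {h : (ℕ → Bool) → Prop |
          (∃ τ : ℕ → Bool, h = fun σ => HWB n (Y.piecewise τ σ)) ∧ ∃ σ : ℕ → Bool, h σ} := by
    intro S hS
    refine ⟨⟨_, rfl⟩, ?_⟩
    obtain ⟨hSD, hScard⟩ := Finset.mem_powersetCard.mp hS
    obtain ⟨i₀, hi₀S⟩ : S.Nonempty := Finset.card_pos.mp (by omega)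
    have hi₀D := hSD hi₀S
    obtain ⟨σ, hσ⟩ := hwitness i₀ hi₀D
    exact ⟨σ, (hsat S hS i₀ hi₀D σ hσ).mpr (Finset.mem_union_left _ hi₀S)⟩
  -- injectivity
  have hinj : ∀ S ∈ Finset.powersetCard w1 D, ∀ S' ∈ Finset.powersetCard w1 D,
      (fun σ => HWB n (Y.piecewise (fun j => decide (j ∈ S ∪ F0)) σ)) =
      (fun σ => HWB n (Y.piecewise (fun j => decide (j ∈ S' ∪ F0)) σ)) → S = S' := by
    intro S hS S' hS' heq
    by_contra hne
    obtain ⟨hSD, hScard⟩ := Finset.mem_powersetCard.mp hS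
    obtain ⟨hSD', hScard'⟩ := Finset.mem_powersetCard.mp hS'
    obtain ⟨i₀, hi₀S, hi₀S'⟩ : ∃ i₀ ∈ S, i₀ ∉ S' := by
      by_contra hall
      push_neg at hall
      exact hne (Finset.eq_of_subset_of_card_le hall (by omega))
    have hi₀D := hSD hi₀S
    obtain ⟨σ, hσ⟩ := hwitness i₀ hi₀D
    have hT : HWB n (Y.piecewise (fun j => decide (j ∈ S ∪ F0)) σ) :=
      (hsat S hS i₀ hi₀D σ hσ).mpr (Finset.mem_union_left _ hi₀S)
    have hF : ¬ HWB n (Y.piecewise (fun j => decide (j ∈ S' ∪ F0)) σ) := by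
      rw [hsat S' hS' i₀ hi₀D σ hσ]
      intro hcon
      rcases Finset.mem_union.mp hcon with h | h
      · exact hi₀S' h
      · exact hF0D i₀ h hi₀D
    apply hF
    have := congrFun heq σ
    rw [← this]
    exact hT
  -- conclude
  haveI : Finite ↥{h : (ℕ → Bool) → Prop |
      (∃ τ : ℕ → Bool, h = fun σ => HWB n (Y.piecewise τ σ)) ∧ ∃ σ : ℕ → Bool, h σ} :=
    (subfun_finite (HWB n) Y).to_subtype
  have hcard : (Finset.powersetCard w1 D).card ≤ subCount (HWB n) Y := by
    have := Nat.card_le_card_of_injective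
      (α := {S // S ∈ Finset.powersetCard w1 D})
      (β := ↥{h : (ℕ → Bool) → Prop |
        (∃ τ : ℕ → Bool, h = fun σ => HWB n (Y.piecewise τ σ)) ∧ ∃ σ : ℕ → Bool, h σ})
      (fun S => ⟨fun σ => HWB n (Y.piecewise (fun j => decide (j ∈ S.1 ∪ F0)) σ),
        hmem S.1 S.2⟩)
      (fun S S' h => Subtype.ext (hinj S.1 S.2 S'.1 S'.2 (congrArg Subtype.val h)))
    rwa [Nat.card_eq_finsetCard] at this
  have hchoose : 2 ^ w1 ≤ (Finset.powersetCard w1 D).card := by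
    rw [Finset.card_powersetCard]
    calc 2 ^ w1 ≤ (2 * w1).choose w1 := two_pow_le_central w1
      _ ≤ D.card.choose w1 := Nat.choose_le_choose w1 h2
  omega



lemma dcount_le (Y : Finset ℕ) (L w : ℕ) : dcount Y L w ≤ Y.card :=
  Finset.card_le_card Finset.inter_subset_left

lemma dcount_succ_le (Y : Finset ℕ) (L w : ℕ) :
    dcount Y L (w + 1) ≤ dcount Y L w + 1 := by
  have hsub : Y ∩ Finset.Icc (w + 1) (w + 1 + L) ⊆
      (Y ∩ Finset.Icc w (w + L)) ∪ {w + 1 + L} := by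
    intro i hi
    simp only [Finset.mem_inter, Finset.mem_Icc] at hi
    obtain ⟨hiY, h1, h2⟩ := hi
    simp only [Finset.mem_union, Finset.mem_inter, Finset.mem_Icc, Finset.mem_singleton]
    rcases Nat.lt_or_ge i (w + 1 + L) with h | h
    · exact Or.inl ⟨hiY, by omega, by omega⟩
    · exact Or.inr (by omega)
  calc (Y ∩ Finset.Icc (w + 1) (w + 1 + L)).card
      ≤ ((Y ∩ Finset.Icc w (w + L)) ∪ {w + 1 + L}).card := Finset.card_le_card hsub
    _ ≤ (Y ∩ Finset.Icc w (w + L)).card + 1 :=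
        le_trans (Finset.card_union_le _ _) (by simp)

lemma le_dcount_succ (Y : Finset ℕ) (L w : ℕ) :
    dcount Y L w ≤ dcount Y L (w + 1) + 1 := by
  have hsub : Y ∩ Finset.Icc w (w + L) ⊆
      (Y ∩ Finset.Icc (w + 1) (w + 1 + L)) ∪ {w} := by
    intro i hi
    simp only [Finset.mem_inter, Finset.mem_Icc] at hi
    obtain ⟨hiY, h1, h2⟩ := hi
    simp only [Finset.mem_union, Finset.mem_inter, Finset.mem_Icc, Finset.mem_singleton]
    rcases Nat.lt_or_ge w i with h | h
    · exact Or.inl ⟨hiY, by omega, by omega⟩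
    · exact Or.inr (by omega)
  calc (Y ∩ Finset.Icc w (w + L)).card
      ≤ ((Y ∩ Finset.Icc (w + 1) (w + 1 + L)) ∪ {w}).card := Finset.card_le_card hsub
    _ ≤ (Y ∩ Finset.Icc (w + 1) (w + 1 + L)).card + 1 :=
        le_trans (Finset.card_union_le _ _) (by simp)

lemma window_aux (n m L β : ℕ) (Y : Finset ℕ) (hY : Y ⊆ Finset.Icc 1 n)
    (hcard : Y.card = m) (hLdef : m + L = n) (hβdef : β = m / 16)
    (hm1 : n ≤ 3 * m) (hm2 : 3 * m ≤ 2 * n) (hm3 : 48 ≤ m) :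
    ∃ w w1 : ℕ, 1 ≤ w1 ∧ β ≤ w1 ∧ w1 ≤ w ∧
      2 * w1 ≤ dcount Y L w ∧ w + dcount Y L w ≤ m + w1 := by
  have hmn : m ≤ n := by omega
  have hβ1 : 1 ≤ β := by omega
  have hβm : 16 * β ≤ m := by omega
  -- the recipe
  have recipe : ∀ w : ℕ, β ≤ w → 2 * β ≤ dcount Y L w →
      w + dcount Y L w ≤ m + β →
      ∃ w w1 : ℕ, 1 ≤ w1 ∧ β ≤ w1 ∧ w1 ≤ w ∧
        2 * w1 ≤ dcount Y L w ∧ w + dcount Y L w ≤ m + w1 := by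
    intro w hw hd hF
    have hdm : dcount Y L w ≤ m := hcard ▸ dcount_le Y L w
    refine ⟨w, min w (dcount Y L w / 2), ?_, ?_, ?_, ?_, ?_⟩ <;> omega
  -- mid point
  obtain ⟨mid, hmiddef⟩ : ∃ mid : ℕ, mid = min (β + (L + 1)) m := ⟨_, rfl⟩
  have hmidβ : β ≤ mid := by omega
  have hmidm : mid ≤ m := by omega
  -- coverage of [β, n] by three windows
  have hcovcard : (Y ∩ Finset.Icc β n).card ≤
      dcount Y L β + dcount Y L mid + dcount Y L m := by
    have hcov : Y ∩ Finset.Icc β n ⊆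
        (Y ∩ Finset.Icc β (β + L)) ∪ (Y ∩ Finset.Icc mid (mid + L)) ∪
          (Y ∩ Finset.Icc m (m + L)) := by
      intro i hi
      simp only [Finset.mem_inter, Finset.mem_Icc] at hi
      obtain ⟨hiY, h1, h2⟩ := hi
      have harith : (β ≤ i ∧ i ≤ β + L) ∨ (mid ≤ i ∧ i ≤ mid + L) ∨
          (m ≤ i ∧ i ≤ m + L) := by omega
      simp only [Finset.mem_union, Finset.mem_inter, Finset.mem_Icc]
      tauto
    calc (Y ∩ Finset.Icc β n).card
        ≤ ((Y ∩ Finset.Icc β (β + L)) ∪ (Y ∩ Finset.Icc mid (mid + L)) ∪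
            (Y ∩ Finset.Icc m (m + L))).card := Finset.card_le_card hcov
      _ ≤ _ := by
          refine le_trans (Finset.card_union_le _ _) ?_
          have := Finset.card_union_le (Y ∩ Finset.Icc β (β + L))
            (Y ∩ Finset.Icc mid (mid + L))
          unfold dcount
          omega
  -- lower bound on mass above β
  have hlow : m ≤ (Y ∩ Finset.Icc β n).card + (β - 1) := by
    have hlowsub : Y ⊆ (Y ∩ Finset.Icc β n) ∪ Finset.Icc 1 (β - 1) := by
      intro i hi
      have hi' := hY hi
      simp only [Finset.mem_Icc] at hi'
      simp only [Finset.mem_union, Finset.mem_inter, Finset.mem_Icc]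
      rcases Nat.lt_or_ge i β with h | h
      · right; omega
      · left; exact ⟨hi, h, hi'.2⟩
    calc m = Y.card := hcard.symm
      _ ≤ ((Y ∩ Finset.Icc β n) ∪ Finset.Icc 1 (β - 1)).card :=
          Finset.card_le_card hlowsub
      _ ≤ (Y ∩ Finset.Icc β n).card + (Finset.Icc 1 (β - 1)).card :=
          Finset.card_union_le _ _
      _ = (Y ∩ Finset.Icc β n).card + (β - 1) := by simp [Nat.card_Icc]
  -- pick the best of the three windows
  have hmax : ∃ ws : ℕ, β ≤ ws ∧ ws ≤ m ∧ m + 1 ≤ β + 3 * dcount Y L ws := by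
    rcases le_total (dcount Y L β) (dcount Y L mid) with h1 | h1
    · rcases le_total (dcount Y L mid) (dcount Y L m) with h2 | h2
      · exact ⟨m, by omega, le_refl m, by omega⟩
      · exact ⟨mid, hmidβ, hmidm, by omega⟩
    · rcases le_total (dcount Y L β) (dcount Y L m) with h2 | h2
      · exact ⟨m, by omega, le_refl m, by omega⟩
      · exact ⟨β, le_refl β, by omega, by omega⟩
  obtain ⟨ws, hwsβ, hwsm, hws⟩ := hmax
  by_cases hcase : ws + dcount Y L ws ≤ m + β
  · exact recipe ws hwsβ (by omega) hcase
  -- descent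
  · obtain ⟨wb, hwbS, hwbmax⟩ :
        ∃ wb ∈ (Finset.Icc β ws).filter (fun w => w + dcount Y L w ≤ m + β),
          ∀ w ∈ (Finset.Icc β ws).filter (fun w => w + dcount Y L w ≤ m + β), w ≤ wb := by
      have hSne : ((Finset.Icc β ws).filter
          (fun w => w + dcount Y L w ≤ m + β)).Nonempty := by
        refine ⟨β, ?_⟩
        simp only [Finset.mem_filter, Finset.mem_Icc]
        have := hcard ▸ dcount_le Y L β
        omega
      exact ⟨_, Finset.max'_mem _ hSne, fun w hw => Finset.le_max' _ w hw⟩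
    simp only [Finset.mem_filter, Finset.mem_Icc] at hwbS
    obtain ⟨⟨hwbβ, hwbws⟩, hwbF⟩ := hwbS
    have hwblt : wb < ws := by
      rcases Nat.lt_or_ge wb ws with h | h
      · exact h
      · exfalso
        have hEq : wb = ws := by omega
        rw [hEq] at hwbF
        exact hcase hwbF
    have hnext : ¬ (wb + 1 + dcount Y L (wb + 1) ≤ m + β) := by
      intro hcon
      have hmem : wb + 1 ∈ (Finset.Icc β ws).filter
          (fun w => w + dcount Y L w ≤ m + β) := by
        simp only [Finset.mem_filter, Finset.mem_Icc]
        exact ⟨⟨by omega, by omega⟩, hcon⟩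
      have := hwbmax _ hmem
      omega
    have hstep := dcount_succ_le Y L wb
    have hFwb : m + β ≤ wb + dcount Y L wb + 2 := by omega
    rcases Nat.lt_or_ge (wb + β + 1) m with hc1 | hc2
    · -- w̄ ≤ m - β - 1 : recipe at w̄
      exact recipe wb hwbβ (by omega) hwbF
    · -- contradiction case
      exfalso
      have hdwb : dcount Y L wb ≤ 2 * β + 1 := by omega
      have hds : dcount Y L ws ≤ dcount Y L wb + (ws - wb) := by
        have hsplit : Y ∩ Finset.Icc ws (ws + L) ⊆
            (Y ∩ Finset.Icc wb (wb + L)) ∪ Finset.Ioc (wb + L) (ws + L) := by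
          intro i hi
          simp only [Finset.mem_inter, Finset.mem_Icc] at hi
          obtain ⟨hiY, h1, h2⟩ := hi
          simp only [Finset.mem_union, Finset.mem_inter, Finset.mem_Icc, Finset.mem_Ioc]
          rcases Nat.lt_or_ge (wb + L) i with h | h
          · exact Or.inr ⟨h, h2⟩
          · exact Or.inl ⟨hiY, by omega, h⟩
        calc dcount Y L ws
            ≤ ((Y ∩ Finset.Icc wb (wb + L)) ∪ Finset.Ioc (wb + L) (ws + L)).card :=
              Finset.card_le_card hsplit
          _ ≤ (Y ∩ Finset.Icc wb (wb + L)).card + (Finset.Ioc (wb + L) (ws + L)).card :=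
              Finset.card_union_le _ _
          _ ≤ dcount Y L wb + (ws - wb) := by
              have : (Finset.Ioc (wb + L) (ws + L)).card = ws + L - (wb + L) := by
                simp [Nat.card_Ioc]
              unfold dcount
              omega
      omega

/-- Splitting the HWB sum along `Y`. -/
lemma piecewise_sum (n : ℕ) {Y : Finset ℕ} (hY : Y ⊆ Finset.Icc 1 n) (τ σ : ℕ → Bool) :
    (∑ i ∈ Finset.Icc 1 n, if Y.piecewise τ σ i then (1 : ℕ) else 0)
      = (∑ i ∈ Y, if τ i then 1 else 0)
        + (∑ i ∈ Finset.Icc 1 n \ Y, if σ i then 1 else 0) := by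
  classical
  conv_lhs => rw [← Finset.union_sdiff_of_subset hY]
  rw [Finset.sum_union Finset.disjoint_sdiff]
  congr 1
  · exact Finset.sum_congr rfl fun i hi => by rw [Finset.piecewise_eq_of_mem _ _ _ hi]
  · exact Finset.sum_congr rfl fun i hi => by
      rw [Finset.piecewise_eq_of_notMem _ _ _ (Finset.mem_sdiff.mp hi).2]

/-- Evaluation of HWB on a two-indicator piecewise assignment. -/
lemma hwb_eval (n : ℕ) {Y A Z : Finset ℕ} (hY : Y ⊆ Finset.Icc 1 n) (hA : A ⊆ Y)
    (hZ : Z ⊆ Finset.Icc 1 n \ Y) (i₀ : ℕ) (hsum : A.card + Z.card = i₀) :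
    (HWB n (Y.piecewise (fun j => decide (j ∈ A)) (fun j => decide (j ∈ Z))) ↔
      1 ≤ i₀ ∧ ((i₀ ∈ Y ∧ i₀ ∈ A) ∨ (i₀ ∉ Y ∧ i₀ ∈ Z))) := by
  classical
  unfold HWB
  rw [piecewise_sum n hY, sum_indicator_card hA, sum_indicator_card hZ, hsum]
  by_cases hi : i₀ ∈ Y
  · rw [Finset.piecewise_eq_of_mem _ _ _ hi]
    simp [hi]
  · rw [Finset.piecewise_eq_of_notMem _ _ _ hi]
    simp [hi]

/-- The cherry lower bound: two distinct nontrivial subfunctions. -/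
lemma subCount_cherry (n p q : ℕ) (hn : 7 ≤ n) (hp : p ∈ Finset.Icc 1 n)
    (hq : q ∈ Finset.Icc 1 n) (hpq : p < q) :
    2 ≤ subCount (HWB n) {p, q} := by
  classical
  simp only [Finset.mem_Icc] at hp hq
  set Y : Finset ℕ := {p, q} with hYdef
  have hY : Y ⊆ Finset.Icc 1 n := by
    intro i hi
    simp only [hYdef, Finset.mem_insert, Finset.mem_singleton] at hi
    rcases hi with rfl | rfl <;> simp [Finset.mem_Icc] <;> omega
  have hYcard : Y.card = 2 := by
    rw [hYdef, Finset.card_insert_of_notMem (by simp; omega), Finset.card_singleton]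
  have hcompl : (Finset.Icc 1 n \ Y).card = n - 2 := by
    rw [Finset.card_sdiff_of_subset hY, Nat.card_Icc, hYcard]
    omega
  have hpY : p ∈ Y := by simp [hYdef]
  have hqY : q ∈ Y := by simp [hYdef]
  have hApY : ({p} : Finset ℕ) ⊆ Y := Finset.singleton_subset_iff.mpr hpY
  have hAqY : ({q} : Finset ℕ) ⊆ Y := Finset.singleton_subset_iff.mpr hqY
  -- witness for h1 (the subfunction with one at p), distinguishing it from h2
  obtain ⟨Z1, hZ1sub, hZ1card⟩ : ∃ Z1 ⊆ Finset.Icc 1 n \ Y, Z1.card = p - 1 := by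
    apply Finset.exists_subset_card_eq; omega
  have hsum1 : ({p} : Finset ℕ).card + Z1.card = p := by
    simp only [Finset.card_singleton]; omega
  have hsat1 : HWB n (Y.piecewise (fun j => decide (j ∈ ({p} : Finset ℕ)))
      (fun j => decide (j ∈ Z1))) := by
    rw [hwb_eval n hY hApY hZ1sub p hsum1]
    exact ⟨by omega, Or.inl ⟨hpY, Finset.mem_singleton_self p⟩⟩
  have hsat2 : ¬ HWB n (Y.piecewise (fun j => decide (j ∈ ({q} : Finset ℕ)))
      (fun j => decide (j ∈ Z1))) := by
    rw [hwb_eval n hY hAqY hZ1sub p (by simp only [Finset.card_singleton]; omega)]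
    rintro ⟨-, ⟨-, hmem⟩ | ⟨hmem, -⟩⟩
    · rw [Finset.mem_singleton] at hmem; omega
    · exact hmem hpY
  -- witness for h2
  have hsat3 : ∃ σ : ℕ → Bool,
      HWB n (Y.piecewise (fun j => decide (j ∈ ({q} : Finset ℕ))) σ) := by
    rcases Nat.lt_or_ge q n with hqn | hqn
    · obtain ⟨Z2, hZ2sub, hZ2card⟩ : ∃ Z2 ⊆ Finset.Icc 1 n \ Y, Z2.card = q - 1 := by
        apply Finset.exists_subset_card_eq; omega
      refine ⟨fun j => decide (j ∈ Z2), ?_⟩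
      rw [hwb_eval n hY hAqY hZ2sub q (by simp only [Finset.card_singleton]; omega)]
      exact ⟨by omega, Or.inl ⟨hqY, Finset.mem_singleton_self q⟩⟩
    · -- q = n : aim the sum at a small index outside Y
      have hqn' : q = n := by omega
      obtain ⟨i, hi2, hi3, hip⟩ : ∃ i : ℕ, 2 ≤ i ∧ i ≤ 3 ∧ i ≠ p := by
        by_cases h : p = 2
        · exact ⟨3, by omega, by omega, by omega⟩
        · exact ⟨2, by omega, by omega, by omega⟩
      have hiY : i ∉ Y := by
        simp only [hYdef, Finset.mem_insert, Finset.mem_singleton]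
        push_neg
        omega
      have hiIcc : i ∈ Finset.Icc 1 n \ Y := by
        rw [Finset.mem_sdiff, Finset.mem_Icc]
        exact ⟨⟨by omega, by omega⟩, hiY⟩
      obtain ⟨W, hWsub, hWcard⟩ :
          ∃ W ⊆ (Finset.Icc 1 n \ Y).erase i, W.card = i - 2 := by
        apply Finset.exists_subset_card_eq
        rw [Finset.card_erase_of_mem hiIcc, hcompl]
        omega
      set Z2 : Finset ℕ := insert i W with hZ2def
      have hiW : i ∉ W := fun hc => (Finset.mem_erase.mp (hWsub hc)).1 rfl
      have hZ2sub : Z2 ⊆ Finset.Icc 1 n \ Y := by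
        rw [hZ2def]
        exact Finset.insert_subset hiIcc (hWsub.trans (Finset.erase_subset _ _))
      have hZ2card : Z2.card = i - 1 := by
        rw [hZ2def, Finset.card_insert_of_notMem hiW]
        omega
      refine ⟨fun j => decide (j ∈ Z2), ?_⟩
      rw [hwb_eval n hY hAqY hZ2sub i (by simp only [Finset.card_singleton]; omega)]
      refine ⟨by omega, Or.inr ⟨hiY, ?_⟩⟩
      rw [hZ2def]
      exact Finset.mem_insert_self i W
  -- assemble : two distinct elements of the subfunction set
  haveI hfin : Finite ↥{h : (ℕ → Bool) → Prop |
      (∃ τ : ℕ → Bool, h = fun σ => HWB n (Y.piecewise τ σ)) ∧ ∃ σ : ℕ → Bool, h σ} :=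
    (subfun_finite (HWB n) Y).to_subtype
  have hm1 : (fun σ => HWB n (Y.piecewise (fun j => decide (j ∈ ({p} : Finset ℕ))) σ)) ∈
      {h : (ℕ → Bool) → Prop |
        (∃ τ : ℕ → Bool, h = fun σ => HWB n (Y.piecewise τ σ)) ∧ ∃ σ : ℕ → Bool, h σ} :=
    ⟨⟨_, rfl⟩, ⟨_, hsat1⟩⟩
  have hm2 : (fun σ => HWB n (Y.piecewise (fun j => decide (j ∈ ({q} : Finset ℕ))) σ)) ∈
      {h : (ℕ → Bool) → Prop |
        (∃ τ : ℕ → Bool, h = fun σ => HWB n (Y.piecewise τ σ)) ∧ ∃ σ : ℕ → Bool, h σ} :=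
    ⟨⟨_, rfl⟩, hsat3⟩
  have hne : (fun σ => HWB n (Y.piecewise (fun j => decide (j ∈ ({p} : Finset ℕ))) σ)) ≠
      (fun σ => HWB n (Y.piecewise (fun j => decide (j ∈ ({q} : Finset ℕ))) σ)) := by
    intro hcon
    have h' := congrFun hcon (fun j => decide (j ∈ Z1))
    exact hsat2 (cast h' hsat1)
  have : Nontrivial ↥{h : (ℕ → Bool) → Prop |
      (∃ τ : ℕ → Bool, h = fun σ => HWB n (Y.piecewise τ σ)) ∧ ∃ σ : ℕ → Bool, h σ} :=
    ⟨⟨_, hm1⟩, ⟨_, hm2⟩, fun hcon => hne (congrArg Subtype.val hcon)⟩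
  exact Finite.one_lt_card_iff_nontrivial.mpr this
lemma main_core (n : ℕ) (hn : 7 ≤ n) (T : Vtree ℕ) (hpr : T.Proper)
    (hvars : T.vars = Finset.Icc 1 n) :
    ∃ t a b : Vtree ℕ, T.IsNode t ∧ t = Vtree.node a b ∧
      (2 : ℝ) ^ ((2000 : ℝ)⁻¹ * n) ≤ (subCount (HWB n) t.vars : ℝ) := by
  have hTcard : T.vars.card = n := by rw [hvars]; simp [Nat.card_Icc]
  rcases Nat.lt_or_ge n 2000 with hsmall | hbig
  · -- small case : cherry
    rcases Vtree.exists_cherry T with ⟨x, hleaf⟩ | ⟨p, q, hch⟩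
    · exfalso
      rw [hleaf] at hTcard
      simp [Vtree.vars] at hTcard
      omega
    · have hsubv : (Vtree.node (Vtree.leaf p) (Vtree.leaf q) : Vtree ℕ).vars ⊆ T.vars :=
        Vtree.isNode_vars_subset hch
      have hvt : (Vtree.node (Vtree.leaf p) (Vtree.leaf q) : Vtree ℕ).vars = {p, q} := by
        show ({p} : Finset ℕ) ∪ {q} = {p, q}
        ext i
        simp
      have hpmem : p ∈ Finset.Icc 1 n := by
        rw [← hvars]
        exact hsubv (by rw [hvt]; simp)
      have hqmem : q ∈ Finset.Icc 1 n := by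
        rw [← hvars]
        exact hsubv (by rw [hvt]; simp)
      have hprt := Vtree.proper_of_isNode hpr hch
      have hne : p ≠ q := by
        have hdisj := hprt.2.2
        simp only [Vtree.vars] at hdisj
        exact Finset.disjoint_singleton.mp hdisj
      have h2 : 2 ≤ subCount (HWB n) (Vtree.node (Vtree.leaf p) (Vtree.leaf q) : Vtree ℕ).vars := by
        rw [hvt]
        rcases Nat.lt_or_ge p q with h | h
        · exact subCount_cherry n p q hn hpmem hqmem h
        · have hqp : q < p := by omega
          have := subCount_cherry n q p hn hqmem hpmem hqp
          rwa [Finset.pair_comm] at this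
      refine ⟨_, _, _, hch, rfl, ?_⟩
      calc (2 : ℝ) ^ ((2000 : ℝ)⁻¹ * n) ≤ 2 ^ (1 : ℝ) := by
            apply Real.rpow_le_rpow_of_exponent_le one_le_two
            rw [inv_mul_le_iff₀ (by norm_num : (0:ℝ) < 2000)]
            rw [mul_one]
            exact_mod_cast hsmall.le
        _ = 2 := Real.rpow_one 2
        _ ≤ (subCount (HWB n) (Vtree.node (Vtree.leaf p) (Vtree.leaf q) : Vtree ℕ).vars : ℝ) := by
            exact_mod_cast h2
  · -- large case : balanced node and window construction
    obtain ⟨t, htnode, hm1, hm2⟩ := Vtree.exists_balanced hpr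
      (K := n / 3 + 1) (by omega) (by omega)
    have hY : t.vars ⊆ Finset.Icc 1 n := hvars ▸ Vtree.isNode_vars_subset htnode
    have h3m : n ≤ 3 * t.vars.card := by omega
    have h3m' : 3 * t.vars.card ≤ 2 * n := by omega
    have h48 : 48 ≤ t.vars.card := by omega
    have hmn : t.vars.card ≤ n := by
      have := Finset.card_le_card hY
      simpa [Nat.card_Icc] using this
    obtain ⟨w, w1, hw11, hw1β, hw1w, hw1d, hw1F⟩ :=
      window_aux n t.vars.card (n - t.vars.card) (t.vars.card / 16) t.vars hY rfl
        (by omega) rfl h3m h3m' h48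
    have hpow := subCount_ge_pow n t.vars hY w w1 hw11 hw1w hw1d hw1F
    obtain ⟨a, b, hab⟩ : ∃ a b : Vtree ℕ, t = Vtree.node a b := by
      cases t with
      | leaf x =>
        exfalso
        simp [Vtree.vars] at h48
      | node a b => exact ⟨a, b, rfl⟩
    refine ⟨t, a, b, htnode, hab, ?_⟩
    have hnat : n ≤ 2000 * w1 := by omega
    calc (2 : ℝ) ^ ((2000 : ℝ)⁻¹ * n) ≤ 2 ^ (w1 : ℝ) := by
          apply Real.rpow_le_rpow_of_exponent_le one_le_two
          rw [inv_mul_le_iff₀ (by norm_num : (0:ℝ) < 2000)]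
          calc (n : ℝ) ≤ (2000 * w1 : ℕ) := by exact_mod_cast hnat
            _ = 2000 * (w1 : ℝ) := by push_cast; ring
      _ = ((2 ^ w1 : ℕ) : ℝ) := by
          rw [Real.rpow_natCast]
          push_cast
          ring
      _ ≤ (subCount (HWB n) t.vars : ℝ) := by exact_mod_cast hpow

/-- There is a constant `c > 0` such that for every `n`
divisible by 7 and every vtree `T` over `{x_1, …, x_n}`, the factor width of
`HWB_n` with respect to `T` is at least `2^(c·n)` (i.e. at some node `t` of
`T` there are at least `2^(c·n)` non-trivial `X_t`-subfunctions); in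
particular, every TDD computing `HWB_n`, respecting any vtree over
`{x_1, …, x_n}`, has size at least `2^(c·n)`. -/
theorem stmt19 :
    ∃ c : ℝ, 0 < c ∧ ∀ n : ℕ, 7 ∣ n →
      (∀ T : Vtree ℕ, T.Proper → T.vars = Finset.Icc 1 n →
        ∃ t : Vtree ℕ, T.IsNode t ∧
          (2 : ℝ) ^ (c * n) ≤ (subCount (HWB n) t.vars : ℝ)) ∧
      (∀ (T : Vtree ℕ) (C : NTDD ℕ) (out : ℕ),
        T.Proper → T.vars = Finset.Icc 1 n →
        C.shape = T → C.WF → C.Det → out ∈ C.nodes →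
        (∀ τ : ℕ → Bool, (C.sat out τ ↔ HWB n τ)) →
        (2 : ℝ) ^ (c * n) ≤ (C.size : ℝ)) := by
  refine ⟨(2000 : ℝ)⁻¹, by norm_num, fun n hdvd => ⟨?_, ?_⟩⟩
  · intro T hpr hvars
    have hn : 7 ≤ n := by
      rcases Nat.eq_zero_or_pos n with rfl | hpos
      · exfalso
        have := Vtree.vars_nonempty T
        rw [hvars] at this
        simp at this
      · exact Nat.le_of_dvd hpos hdvd
    obtain ⟨t, a, b, h1, h2, h3⟩ := main_core n hn T hpr hvars
    exact ⟨t, h1, h3⟩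
  · intro T C out hpr hvars hshape hWF hDet hout hcomp
    have hn : 7 ≤ n := by
      rcases Nat.eq_zero_or_pos n with rfl | hpos
      · exfalso
        have := Vtree.vars_nonempty T
        rw [hvars] at this
        simp at this
      · exact Nat.le_of_dvd hpos hdvd
    obtain ⟨t, a, b, htn, hab, hbound⟩ := main_core n hn T hpr hvars
    have hiso : C.shape.IsNode t := by rw [hshape]; exact htn
    obtain ⟨D, hsubD, hDshape⟩ := NTDD.exists_subdiagram hiso
    obtain ⟨l, r, ns, E, hDeq⟩ : ∃ l r ns E, D = NTDD.node l r ns E := by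
      cases D with
      | leaf x ns lab =>
        exfalso
        rw [hab] at hDshape
        simp [NTDD.shape] at hDshape
      | node l r ns E => exact ⟨l, r, ns, E, rfl⟩
    have hsize := NTDD.subCount_le_size C (by rw [hshape]; exact hpr) hWF hDet
      out hout hsubD hDeq
    have hfun : (fun ρ => C.sat out ρ) = HWB n := funext fun ρ => propext (hcomp ρ)
    rw [hfun, hDshape] at hsize
    exact le_trans hbound (by exact_mod_cast hsize)
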